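/- arXiv:2102.08571 — 2 statements merged into one kernel-verified Lean document; each statement's English description precedes it below -/
import Mathlib

section
/- There exists a unique function V_st : X → ℝ satisfying the dynamic programming equation with optimized lookahead: V_st(x) = min_{a∈A, 1 ≤ Δt ≤ T̄} ( c̄(x,a,Δt) + β^{Δt} · ( O + E_{y∼P̄(x,a,Δt)}[V_st(y)] ) ) for all x ∈ X. -/
open scoped BigOperators

/-- Expectation of `f` under a probability mass function `p` on a finite type. -/
noncomputable def expect {X : Type*} [Fintype X] (p : PMF X) (f : X → ℝ) : ℝ :=
  ∑ y, (p y).toReal * f y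

/-- The classic Bellman operator `(T v)(x) = min_a ( c(x,a) + β · E_{y∼P(x,a)}[v(y)] )`. -/
noncomputable def bellman {X A : Type*} [Fintype X] [Fintype A]
    (P : X → A → PMF X) (c : X × A → ℝ) (β : ℝ) (v : X → ℝ) : X → ℝ :=
  fun x => ⨅ a : A, (c (x, a) + β * expect (P x a) v)

/-- The skip kernel: distribution of the state after `t` steps from `x`, holding action `a`. -/
noncomputable def skip {X A : Type*} (P : X → A → PMF X) (x : X) (a : A) : ℕ → PMF X
  | 0 => PMF.pure x
  | t + 1 => (skip P x a t).bind fun y => P y a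

/-- The consolidated cost `c̄(x,a,Δt) = ∑_{t=0}^{Δt−1} β^t · E_{y∼P̄(x,a,t)}[c(y,a)]`. -/
noncomputable def cbar {X A : Type*} [Fintype X]
    (P : X → A → PMF X) (c : X × A → ℝ) (β : ℝ) (x : X) (a : A) (Δt : ℕ) : ℝ :=
  ∑ t ∈ Finset.range Δt, β ^ t * expect (skip P x a t) (fun y => c (y, a))

/-- The optimized-lookahead Bellman operator
`(T_O v)(x) = min_{a, 1 ≤ Δt ≤ T̄} ( c̄(x,a,Δt) + β^Δt ( O + E_{y∼P̄(x,a,Δt)}[v(y)] ) )`. -/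
noncomputable def TO {X A : Type*} [Fintype X] [Fintype A]
    (P : X → A → PMF X) (c : X × A → ℝ) (β O : ℝ) (Tb : ℕ) (v : X → ℝ) : X → ℝ :=
  fun x => ⨅ a : A, ⨅ Δt : {n : ℕ // n ∈ Finset.Icc 1 Tb},
    (cbar P c β x a Δt.val + β ^ Δt.val * (O + expect (skip P x a Δt.val) v))

/-- The evaluation operator of a stationary self-triggering policy `μ = (π, τ)`. -/
noncomputable def Tpol {X A : Type*} [Fintype X]
    (P : X → A → PMF X) (c : X × A → ℝ) (β O : ℝ)
    (π : X → A) (τ : X → ℕ) (v : X → ℝ) : X → ℝ :=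
  fun x => cbar P c β x (π x) (τ x) + β ^ (τ x) * (O + expect (skip P x (π x) (τ x)) v)

open scoped ENNReal in
lemma expect_sum_one {X : Type*} [Fintype X] (p : PMF X) :
    ∑ y : X, (p y).toReal = 1 := by
  have h := p.tsum_coe
  rw [tsum_fintype] at h
  have h2 : (∑ y : X, p y).toReal = (1 : ℝ≥0∞).toReal := by rw [h]
  rwa [ENNReal.toReal_sum (fun a _ => p.apply_ne_top a), ENNReal.toReal_one] at h2

lemma expect_abs_sub_le {X : Type*} [Fintype X] [Nonempty X] (p : PMF X) (v w : X → ℝ) {d : ℝ}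
    (h : ∀ y, |v y - w y| ≤ d) : |expect p v - expect p w| ≤ d := by
  unfold expect
  rw [← Finset.sum_sub_distrib]
  have he : ∀ y : X, (p y).toReal * v y - (p y).toReal * w y = (p y).toReal * (v y - w y) := by
    intro y; ring
  simp_rw [he]
  calc |∑ y : X, (p y).toReal * (v y - w y)| ≤ ∑ y : X, |(p y).toReal * (v y - w y)| :=
        Finset.abs_sum_le_sum_abs _ _
    _ ≤ ∑ y : X, (p y).toReal * d := by
        apply Finset.sum_le_sum
        intro y _
        rw [abs_mul, abs_of_nonneg ENNReal.toReal_nonneg]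
        exact mul_le_mul_of_nonneg_left (h y) ENNReal.toReal_nonneg
    _ = d := by rw [← Finset.sum_mul, expect_sum_one, one_mul]

lemma ciInf_le_ciInf_add {ι : Type*} [Finite ι] [Nonempty ι] (f g : ι → ℝ) (d : ℝ)
    (h : ∀ i, f i ≤ g i + d) : (⨅ i, f i) ≤ (⨅ i, g i) + d := by
  obtain ⟨i0, hi0⟩ := Finite.exists_min g
  calc (⨅ i, f i) ≤ f i0 := ciInf_le (Set.finite_range f).bddBelow i0
    _ ≤ g i0 + d := h i0
    _ ≤ (⨅ i, g i) + d := by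
        gcongr
        exact le_ciInf hi0

theorem TO_unique_fixed_point {X A : Type*} [Fintype X] [Nonempty X] [Fintype A] [Nonempty A]
    (P : X → A → PMF X) (c : X × A → ℝ) (hc : ∀ (x : X) (a : A), 0 ≤ c (x, a))
    (β : ℝ) (hβ0 : 0 ≤ β) (hβ1 : β < 1)
    (O : ℝ) (hO : 0 ≤ O) (Tb : ℕ) (hTb : 1 ≤ Tb) :
    ∃! Vst : X → ℝ, ∀ x : X, Vst x = TO P c β O Tb Vst x := by
  have hne : Nonempty {n : ℕ // n ∈ Finset.Icc 1 Tb} :=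
    ⟨⟨1, Finset.mem_Icc.mpr ⟨le_refl 1, hTb⟩⟩⟩
  have key : ∀ v w : X → ℝ, ∀ x : X,
      TO P c β O Tb v x ≤ TO P c β O Tb w x + β * dist v w := by
    intro v w x
    unfold TO
    apply ciInf_le_ciInf_add
    intro a
    apply ciInf_le_ciInf_add
    intro Δt
    obtain ⟨hΔ1, _⟩ := Finset.mem_Icc.mp Δt.2
    have h1 : expect (skip P x a Δt.val) v ≤ expect (skip P x a Δt.val) w + dist v w := by
      have := expect_abs_sub_le (skip P x a Δt.val) v w
        (fun y => by rw [← Real.dist_eq]; exact dist_le_pi_dist v w y)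
      have := le_trans (le_abs_self _) this
      linarith
    have h2 := mul_le_mul_of_nonneg_left h1 (pow_nonneg hβ0 Δt.val)
    rw [mul_add] at h2
    have h3 : β ^ Δt.val * dist v w ≤ β * dist v w := by
      have hp : β ^ Δt.val ≤ β ^ 1 := pow_le_pow_of_le_one hβ0 hβ1.le hΔ1
      rw [pow_one] at hp
      exact mul_le_mul_of_nonneg_right hp dist_nonneg
    rw [mul_add, mul_add]
    linarith
  set K : NNReal := ⟨β, hβ0⟩ with hK
  have hKβ : (K : ℝ) = β := rfl
  have hL : LipschitzWith K (TO P c β O Tb) := by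
    apply LipschitzWith.of_dist_le_mul
    intro v w
    rw [dist_pi_le_iff (by positivity)]
    intro x
    rw [Real.dist_eq, abs_sub_le_iff, hKβ]
    have k1 := key v w x
    have k2 := key w v x
    rw [dist_comm w v] at k2
    constructor <;> linarith
  have hC : ContractingWith K (TO P c β O Tb) := ⟨by rw [← NNReal.coe_lt_coe, hKβ, NNReal.coe_one]; exact hβ1, hL⟩
  refine ⟨hC.fixedPoint _, fun x => (congrFun hC.fixedPoint_isFixedPt x).symm, ?_⟩
  intro y hy
  exact hC.fixedPoint_unique (funext fun x => (hy x).symm)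
end

section
/- The solution of the dynamic programming equation with optimized lookahead is a lower bound for policy evaluation: if V_st is the unique fixed point of T_O and μ = (π, τ) is any stationary self-triggering policy with evaluation fixed point f^μ (the unique fixed point of T_μ), then V_st(x) ≤ f^μ(x) for every x ∈ X. -/
open scoped BigOperators

lemma pmf_sum_toReal_one {X : Type*} [Fintype X] (p : PMF X) :
    ∑ y, (p y).toReal = 1 := by
  have h := p.tsum_coe
  rw [tsum_fintype] at h
  rw [← ENNReal.toReal_sum (fun a _ => p.apply_ne_top a), h, ENNReal.toReal_one]

theorem Vst_le_policy_value {X A : Type*} [Fintype X] [Nonempty X] [Fintype A] [Nonempty A]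
    (P : X → A → PMF X) (c : X × A → ℝ) (hc : ∀ (x : X) (a : A), 0 ≤ c (x, a))
    (β : ℝ) (hβ0 : 0 ≤ β) (hβ1 : β < 1)
    (O : ℝ) (hO : 0 ≤ O) (Tb : ℕ) (hTb : 1 ≤ Tb)
    (Vst : X → ℝ) (hVst : TO P c β O Tb Vst = Vst)
    (π : X → A) (τ : X → ℕ) (hτ : ∀ x : X, 1 ≤ τ x ∧ τ x ≤ Tb)
    (fμ : X → ℝ) (hfμ : Tpol P c β O π τ fμ = fμ) :
    ∀ x : X, Vst x ≤ fμ x := by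
  by_contra hcon
  push_neg at hcon
  obtain ⟨z, hz⟩ := hcon
  obtain ⟨x0, -, hx0⟩ := Finset.exists_max_image Finset.univ (fun x => Vst x - fμ x)
    ⟨z, Finset.mem_univ z⟩
  set M := Vst x0 - fμ x0 with hM
  have hMz : ∀ x, Vst x - fμ x ≤ M := fun x => hx0 x (Finset.mem_univ x)
  have hMpos : 0 < M := lt_of_lt_of_le (by linarith [hz]) (hMz z)
  -- step 1: Vst x0 = TO Vst x0 ≤ Tpol Vst x0
  have h1 : Vst x0 ≤ Tpol P c β O π τ Vst x0 := by
    conv_lhs => rw [← hVst]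
    have hmem : τ x0 ∈ Finset.Icc 1 Tb := Finset.mem_Icc.2 ⟨(hτ x0).1, (hτ x0).2⟩
    have hA : (⨅ a : A, ⨅ Δt : {n : ℕ // n ∈ Finset.Icc 1 Tb},
        (cbar P c β x0 a Δt.val + β ^ Δt.val * (O + expect (skip P x0 a Δt.val) Vst)))
        ≤ ⨅ Δt : {n : ℕ // n ∈ Finset.Icc 1 Tb},
        (cbar P c β x0 (π x0) Δt.val + β ^ Δt.val * (O + expect (skip P x0 (π x0) Δt.val) Vst)) :=
      ciInf_le (Set.Finite.bddBelow (Set.finite_range _)) (π x0)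
    have hB : (⨅ Δt : {n : ℕ // n ∈ Finset.Icc 1 Tb},
        (cbar P c β x0 (π x0) Δt.val + β ^ Δt.val * (O + expect (skip P x0 (π x0) Δt.val) Vst)))
        ≤ cbar P c β x0 (π x0) (τ x0) + β ^ (τ x0) * (O + expect (skip P x0 (π x0) (τ x0)) Vst) :=
      ciInf_le (Set.Finite.bddBelow (Set.finite_range _)) (⟨τ x0, hmem⟩ : {n : ℕ // n ∈ Finset.Icc 1 Tb})
    exact le_trans hA hB
  -- step 2: expectation bound
  have hE : ∀ (p : PMF X), expect p Vst ≤ expect p fμ + M := by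
    intro p
    have : expect p Vst ≤ ∑ y, (p y).toReal * (fμ y + M) := by
      apply Finset.sum_le_sum
      intro y _
      exact mul_le_mul_of_nonneg_left (by linarith [hMz y]) ENNReal.toReal_nonneg
    calc expect p Vst ≤ ∑ y, (p y).toReal * (fμ y + M) := this
      _ = expect p fμ + (∑ y, (p y).toReal) * M := by
          simp [expect, mul_add, Finset.sum_add_distrib, Finset.sum_mul]
      _ = expect p fμ + M := by rw [pmf_sum_toReal_one]; ring
  -- step 3: Tpol Vst x0 ≤ fμ x0 + β^τ * M
  have h2 : Tpol P c β O π τ Vst x0 ≤ fμ x0 + β ^ (τ x0) * M := by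
    have hβp : (0:ℝ) ≤ β ^ (τ x0) := pow_nonneg hβ0 _
    have := hE (skip P x0 (π x0) (τ x0))
    have h3 : Tpol P c β O π τ Vst x0 ≤ Tpol P c β O π τ fμ x0 + β ^ (τ x0) * M := by
      simp only [Tpol]
      nlinarith [this]
    rw [congrFun hfμ x0] at h3
    exact h3
  -- step 4: β^τ ≤ β
  have hβτ : β ^ (τ x0) ≤ β := by
    calc β ^ (τ x0) ≤ β ^ 1 := pow_le_pow_of_le_one hβ0 (le_of_lt hβ1) (hτ x0).1
      _ = β := pow_one β
  have : M ≤ β * M := by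
    have : Vst x0 ≤ fμ x0 + β * M := by
      have := mul_le_mul_of_nonneg_right hβτ (le_of_lt hMpos)
      linarith [h1, h2]
    linarith
  nlinarith
end
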